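/- Let p > 2, α, β > 1 with α + β = p, and a₁, a₂, b₁, b₂, d > 0. Define e(s,t) := a₁s² + a₂t² − b₁sᵖ − b₂tᵖ + d·sᵅtᵝ on V := (0,∞) × (0,∞), and assume that (1,1) is a critical point of e (both partial derivatives of e vanish at (1,1)). Then there exist real numbers 0 < r < R < ∞ and δ > 0 such that: (i) δ ≤ ∂e/∂s(r,t) and ∂e/∂s(R,t) ≤ −1 for all t ∈ [r,R]; (ii) δ ≤ ∂e/∂t(s,r) and ∂e/∂t(s,R) ≤ −1 for all s ∈ [r,R]; (iii) every critical point of e in V lies in the open square (r,R) × (r,R); and (iv) the supremum of e over V equals the maximum of e over Q := [r,R] × [r,R]. -/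

import Mathlib

open Set

/-- The function `e(s,t) = a₁s² + a₂t² − b₁sᵖ − b₂tᵖ + d sᵅ tᵝ` of the appendix. -/
noncomputable def eFun (a₁ a₂ b₁ b₂ d p α β : ℝ) (s t : ℝ) : ℝ :=
  a₁ * s ^ 2 + a₂ * t ^ 2 - b₁ * s ^ p - b₂ * t ^ p + d * s ^ α * t ^ β

/-- The partial derivative `∂e/∂s`. -/
noncomputable def eFunDS (a₁ a₂ b₁ b₂ d p α β : ℝ) (s t : ℝ) : ℝ :=
  deriv (fun s' => eFun a₁ a₂ b₁ b₂ d p α β s' t) s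

/-- The partial derivative `∂e/∂t`. -/
noncomputable def eFunDT (a₁ a₂ b₁ b₂ d p α β : ℝ) (s t : ℝ) : ℝ :=
  deriv (fun t' => eFun a₁ a₂ b₁ b₂ d p α β s t') t

lemma hasDerivAt_eFun_s (a₁ a₂ b₁ b₂ d p α β t : ℝ) {s : ℝ} (hs : s ≠ 0) :
    HasDerivAt (fun s' => eFun a₁ a₂ b₁ b₂ d p α β s' t)
      (2 * a₁ * s - b₁ * p * s ^ (p - 1) + d * α * s ^ (α - 1) * t ^ β) s := by
  have h1 : HasDerivAt (fun s' : ℝ => a₁ * s' ^ 2) (a₁ * (2 * s)) s := by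
    simpa using (hasDerivAt_pow 2 s).const_mul a₁
  have h2 : HasDerivAt (fun s' : ℝ => b₁ * s' ^ p) (b₁ * (p * s ^ (p - 1))) s :=
    (Real.hasDerivAt_rpow_const (Or.inl hs)).const_mul b₁
  have h3 : HasDerivAt (fun s' : ℝ => d * s' ^ α * t ^ β)
      (d * (α * s ^ (α - 1)) * t ^ β) s :=
    ((Real.hasDerivAt_rpow_const (Or.inl hs)).const_mul d).mul_const (t ^ β)
  have := (((h1.add_const (a₂ * t ^ 2)).sub h2).sub_const (b₂ * t ^ p)).add h3
  exact this.congr_deriv (by ring)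

lemma hasDerivAt_eFun_t (a₁ a₂ b₁ b₂ d p α β s : ℝ) {t : ℝ} (ht : t ≠ 0) :
    HasDerivAt (fun t' => eFun a₁ a₂ b₁ b₂ d p α β s t')
      (2 * a₂ * t - b₂ * p * t ^ (p - 1) + d * β * s ^ α * t ^ (β - 1)) t := by
  have h1 : HasDerivAt (fun t' : ℝ => a₂ * t' ^ 2) (a₂ * (2 * t)) t := by
    simpa using (hasDerivAt_pow 2 t).const_mul a₂
  have h2 : HasDerivAt (fun t' : ℝ => b₂ * t' ^ p) (b₂ * (p * t ^ (p - 1))) t :=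
    (Real.hasDerivAt_rpow_const (Or.inl ht)).const_mul b₂
  have h3 : HasDerivAt (fun t' : ℝ => d * s ^ α * t' ^ β)
      (d * s ^ α * (β * t ^ (β - 1))) t :=
    (Real.hasDerivAt_rpow_const (Or.inl ht)).const_mul (d * s ^ α)
  have := (((h1.const_add (a₁ * s ^ 2)).sub_const (b₁ * s ^ p)).sub h2).add h3
  exact this.congr_deriv (by ring)

lemma pow2_le (x pp : ℝ) (hx : 0 < x) (hpp : 2 < pp) : pp * x ^ 2 ≤ 2 * x ^ pp + (pp - 2) := by
  have hpp0 : (0:ℝ) < pp := by linarith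
  have hw2 : (0:ℝ) ≤ 1 - 2 / pp := by
    have : 2 / pp ≤ 1 := by rw [div_le_one hpp0]; linarith
    linarith
  have h := Real.geom_mean_le_arith_mean2_weighted
    (by positivity : (0:ℝ) ≤ 2 / pp) hw2
    (Real.rpow_pos_of_pos hx pp).le zero_le_one (by field_simp; ring)
  have hx2 : (x ^ pp) ^ (2 / pp) = x ^ 2 := by
    rw [← Real.rpow_mul hx.le, show pp * (2 / pp) = ((2:ℕ):ℝ) by push_cast; field_simp,
      Real.rpow_natCast]
  rw [Real.one_rpow, mul_one, mul_one, hx2] at h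
  have h3 : pp * (2 / pp * x ^ pp + (1 - 2 / pp)) = 2 * x ^ pp + (pp - 2) := by
    field_simp
  linarith [mul_le_mul_of_nonneg_left h hpp0.le]

lemma amgm (x y u v : ℝ) (hx : 0 < x) (hy : 0 < y) (hu : 0 < u) (hv : 0 < v) :
    (u + v) * (x ^ u * y ^ v) ≤ u * x ^ (u + v) + v * y ^ (u + v) := by
  have huv : (0:ℝ) < u + v := by linarith
  have h := Real.geom_mean_le_arith_mean2_weighted
    (by positivity : (0:ℝ) ≤ u / (u+v)) (by positivity : (0:ℝ) ≤ v / (u+v))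
    (Real.rpow_pos_of_pos hx (u+v)).le (Real.rpow_pos_of_pos hy (u+v)).le
    (by field_simp)
  rw [← Real.rpow_mul hx.le, ← Real.rpow_mul hy.le] at h
  rw [show (u+v) * (u/(u+v)) = u by field_simp,
      show (u+v) * (v/(u+v)) = v by field_simp] at h
  have h2 := mul_le_mul_of_nonneg_left h huv.le
  calc (u+v) * (x^u * y^v) ≤ (u+v) * (u/(u+v) * x^(u+v) + v/(u+v) * y^(u+v)) := h2
    _ = u * x^(u+v) + v * y^(u+v) := by field_simp

set_option maxHeartbeats 1000000 in
/-- Lemma A.1 of the appendix. -/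
theorem statement3 (a₁ a₂ b₁ b₂ d p α β : ℝ)
    (ha₁ : 0 < a₁) (ha₂ : 0 < a₂) (hb₁ : 0 < b₁) (hb₂ : 0 < b₂) (hd : 0 < d)
    (hp : 2 < p) (hα : 1 < α) (hβ : 1 < β) (hαβ : α + β = p)
    (hcritS : eFunDS a₁ a₂ b₁ b₂ d p α β 1 1 = 0)
    (hcritT : eFunDT a₁ a₂ b₁ b₂ d p α β 1 1 = 0) :
    ∃ r R δ : ℝ, 0 < r ∧ r < R ∧ 0 < δ ∧
      (∀ t ∈ Icc r R,
        δ ≤ eFunDS a₁ a₂ b₁ b₂ d p α β r t ∧ eFunDS a₁ a₂ b₁ b₂ d p α β R t ≤ -1) ∧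
      (∀ s ∈ Icc r R,
        δ ≤ eFunDT a₁ a₂ b₁ b₂ d p α β s r ∧ eFunDT a₁ a₂ b₁ b₂ d p α β s R ≤ -1) ∧
      (∀ s t : ℝ, 0 < s → 0 < t →
        eFunDS a₁ a₂ b₁ b₂ d p α β s t = 0 → eFunDT a₁ a₂ b₁ b₂ d p α β s t = 0 →
        s ∈ Ioo r R ∧ t ∈ Ioo r R) ∧
      (∃ s₀ ∈ Icc r R, ∃ t₀ ∈ Icc r R, ∀ s t : ℝ, 0 < s → 0 < t →
        eFun a₁ a₂ b₁ b₂ d p α β s t ≤ eFun a₁ a₂ b₁ b₂ d p α β s₀ t₀) := by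
  have hp0 : (0:ℝ) < p := by linarith
  have hp2 : (0:ℝ) < p - 2 := by linarith
  have hα0 : (0:ℝ) < α := by linarith
  have hβ0 : (0:ℝ) < β := by linarith
  have hDS : ∀ (s t : ℝ), s ≠ 0 → eFunDS a₁ a₂ b₁ b₂ d p α β s t =
      2 * a₁ * s - b₁ * p * s ^ (p - 1) + d * α * s ^ (α - 1) * t ^ β :=
    fun s t hs => (hasDerivAt_eFun_s a₁ a₂ b₁ b₂ d p α β t hs).deriv
  have hDT : ∀ (s t : ℝ), t ≠ 0 → eFunDT a₁ a₂ b₁ b₂ d p α β s t =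
      2 * a₂ * t - b₂ * p * t ^ (p - 1) + d * β * s ^ α * t ^ (β - 1) :=
    fun s t ht => (hasDerivAt_eFun_t a₁ a₂ b₁ b₂ d p α β s ht).deriv
  have hc₁ : b₁ * p = 2 * a₁ + d * α := by
    have h := hcritS
    rw [hDS 1 1 one_ne_zero] at h
    simp only [Real.one_rpow, mul_one] at h
    linarith
  have hc₂ : b₂ * p = 2 * a₂ + d * β := by
    have h := hcritT
    rw [hDT 1 1 one_ne_zero] at h
    simp only [Real.one_rpow, mul_one] at h
    linarith
  have hb₁p : (0:ℝ) < b₁ * p := mul_pos hb₁ hp0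
  have hb₂p : (0:ℝ) < b₂ * p := mul_pos hb₂ hp0
  have hq₁0 : (0:ℝ) < a₁ / (b₁ * p) := div_pos ha₁ hb₁p
  have hq₂0 : (0:ℝ) < a₂ / (b₂ * p) := div_pos ha₂ hb₂p
  have hq₁ : a₁ / (b₁ * p) < 1 := by rw [div_lt_one hb₁p]; nlinarith
  have hq₂ : a₂ / (b₂ * p) < 1 := by rw [div_lt_one hb₂p]; nlinarith
  set r : ℝ := min ((a₁ / (b₁ * p)) ^ ((1:ℝ) / (p - 2)))
      ((a₂ / (b₂ * p)) ^ ((1:ℝ) / (p - 2))) with hrdef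
  set R : ℝ := max (max (1 / (2 * a₁)) (1 / (2 * a₂)))
      (max 2 ((2:ℝ) ^ ((1:ℝ) / (p - 2)))) with hRdef
  have hr0 : 0 < r :=
    lt_min (Real.rpow_pos_of_pos hq₁0 _) (Real.rpow_pos_of_pos hq₂0 _)
  have hr1 : r < 1 :=
    (min_le_left _ _).trans_lt (Real.rpow_lt_one hq₁0.le hq₁ (by positivity))
  have hR2 : (2:ℝ) ≤ R := le_max_of_le_right (le_max_left _ _)
  have hR0 : (0:ℝ) < R := by linarith
  have hR1 : (1:ℝ) < R := by linarith
  have hrR : r < R := by linarith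
  have hrp₁ : r ^ (p - 2) ≤ a₁ / (b₁ * p) := by
    calc r ^ (p-2) ≤ ((a₁/(b₁*p)) ^ ((1:ℝ)/(p-2))) ^ (p-2) :=
          Real.rpow_le_rpow hr0.le (min_le_left _ _) hp2.le
      _ = a₁/(b₁*p) := by
          rw [← Real.rpow_mul hq₁0.le, one_div, inv_mul_cancel₀ hp2.ne', Real.rpow_one]
  have hrp₂ : r ^ (p - 2) ≤ a₂ / (b₂ * p) := by
    calc r ^ (p-2) ≤ ((a₂/(b₂*p)) ^ ((1:ℝ)/(p-2))) ^ (p-2) :=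
          Real.rpow_le_rpow hr0.le (min_le_right _ _) hp2.le
      _ = a₂/(b₂*p) := by
          rw [← Real.rpow_mul hq₂0.le, one_div, inv_mul_cancel₀ hp2.ne', Real.rpow_one]
  have hRp : (2:ℝ) ≤ R ^ (p - 2) := by
    calc (2:ℝ) = ((2:ℝ) ^ ((1:ℝ)/(p-2))) ^ (p-2) := by
          rw [← Real.rpow_mul (by norm_num), one_div, inv_mul_cancel₀ hp2.ne', Real.rpow_one]
      _ ≤ R ^ (p-2) :=
          Real.rpow_le_rpow (by positivity) (le_max_of_le_right (le_max_right _ _)) hp2.le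
  have hRa₁ : (1:ℝ) ≤ 2 * a₁ * R := by
    have h : 1 / (2 * a₁) ≤ R := le_max_of_le_left (le_max_left _ _)
    rw [div_le_iff₀ (by positivity)] at h
    linarith
  have hRa₂ : (1:ℝ) ≤ 2 * a₂ * R := by
    have h : 1 / (2 * a₂) ≤ R := le_max_of_le_left (le_max_right _ _)
    rw [div_le_iff₀ (by positivity)] at h
    linarith
  have hsplit : ∀ x : ℝ, 0 < x → x ^ (p - 1) = x ^ (p - 2) * x := fun x hx => by
    rw [show p - 1 = (p - 2) + 1 by ring, Real.rpow_add hx, Real.rpow_one]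
  have hsplitα : ∀ x : ℝ, 0 < x → x ^ (α - 1) * x ^ β = x ^ (p - 1) := fun x hx => by
    rw [← Real.rpow_add hx]; congr 1; linarith
  have hsplitβ : ∀ x : ℝ, 0 < x → x ^ α * x ^ (β - 1) = x ^ (p - 1) := fun x hx => by
    rw [← Real.rpow_add hx]; congr 1; linarith
  refine ⟨r, R, min (a₁ * r) (a₂ * r), hr0, hrR,
    lt_min (by positivity) (by positivity), ?_, ?_, ?_, ?_⟩
  · -- part (i)
    intro t ht
    obtain ⟨ht1, ht2⟩ := ht
    have ht0 : 0 < t := lt_of_lt_of_le hr0 ht1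
    constructor
    · rw [hDS r t hr0.ne']
      have hpos : 0 < d * α * r ^ (α - 1) * t ^ β := by positivity
      have hb : b₁ * p * r ^ (p - 1) ≤ a₁ * r := by
        rw [hsplit r hr0]
        have h1 : r ^ (p-2) * r ≤ (a₁/(b₁*p)) * r :=
          mul_le_mul_of_nonneg_right hrp₁ hr0.le
        have h2 : b₁ * p * (r ^ (p-2) * r) ≤ b₁ * p * ((a₁/(b₁*p)) * r) :=
          mul_le_mul_of_nonneg_left h1 hb₁p.le
        have h3 : b₁ * p * ((a₁/(b₁*p)) * r) = a₁ * r := by field_simp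
        linarith
      have := min_le_left (a₁ * r) (a₂ * r)
      linarith
    · rw [hDS R t hR0.ne']
      rw [hsplit R hR0]
      have htβ : t ^ β ≤ R ^ β := Real.rpow_le_rpow ht0.le ht2 hβ0.le
      have key2 : d * α * R ^ (α - 1) * t ^ β ≤ d * α * (R ^ (p - 2) * R) := by
        have h' : R ^ (α-1) * t ^ β ≤ R ^ (p-2) * R := by
          rw [← hsplit R hR0, ← hsplitα R hR0]
          exact mul_le_mul_of_nonneg_left htβ (by positivity)
        calc d * α * R ^ (α-1) * t ^ β = d * α * (R ^ (α-1) * t ^ β) := by ring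
          _ ≤ d * α * (R ^ (p-2) * R) := mul_le_mul_of_nonneg_left h' (by positivity)
      have e3 : b₁ * p * (R ^ (p-2) * R) = (2*a₁ + d*α) * (R ^ (p-2) * R) := by rw [hc₁]
      have e4 : 2 * R ≤ R ^ (p-2) * R := mul_le_mul_of_nonneg_right hRp hR0.le
      have e5 := mul_le_mul_of_nonneg_left e4 (by positivity : (0:ℝ) ≤ 2 * a₁)
      linarith
  · -- part (ii)
    intro s hs
    obtain ⟨hs1, hs2⟩ := hs
    have hs0 : 0 < s := lt_of_lt_of_le hr0 hs1
    constructor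
    · rw [hDT s r hr0.ne']
      have hpos : 0 < d * β * s ^ α * r ^ (β - 1) := by positivity
      have hb : b₂ * p * r ^ (p - 1) ≤ a₂ * r := by
        rw [hsplit r hr0]
        have h1 : r ^ (p-2) * r ≤ (a₂/(b₂*p)) * r :=
          mul_le_mul_of_nonneg_right hrp₂ hr0.le
        have h2 : b₂ * p * (r ^ (p-2) * r) ≤ b₂ * p * ((a₂/(b₂*p)) * r) :=
          mul_le_mul_of_nonneg_left h1 hb₂p.le
        have h3 : b₂ * p * ((a₂/(b₂*p)) * r) = a₂ * r := by field_simp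
        linarith
      have := min_le_right (a₁ * r) (a₂ * r)
      linarith
    · rw [hDT s R hR0.ne']
      rw [hsplit R hR0]
      have hsα : s ^ α ≤ R ^ α := Real.rpow_le_rpow hs0.le hs2 hα0.le
      have key2 : d * β * s ^ α * R ^ (β - 1) ≤ d * β * (R ^ (p - 2) * R) := by
        have h' : s ^ α * R ^ (β-1) ≤ R ^ (p-2) * R := by
          rw [← hsplit R hR0, ← hsplitβ R hR0]
          exact mul_le_mul_of_nonneg_right hsα (by positivity)
        calc d * β * s ^ α * R ^ (β-1) = d * β * (s ^ α * R ^ (β-1)) := by ring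
          _ ≤ d * β * (R ^ (p-2) * R) := mul_le_mul_of_nonneg_left h' (by positivity)
      have e3 : b₂ * p * (R ^ (p-2) * R) = (2*a₂ + d*β) * (R ^ (p-2) * R) := by rw [hc₂]
      have e4 : 2 * R ≤ R ^ (p-2) * R := mul_le_mul_of_nonneg_right hRp hR0.le
      have e5 := mul_le_mul_of_nonneg_left e4 (by positivity : (0:ℝ) ≤ 2 * a₂)
      linarith
  · -- part (iii)
    intro s t hs ht hS hT
    rw [hDS s t hs.ne', hsplit s hs] at hS
    rw [hDT s t ht.ne', hsplit t ht] at hT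
    have hposS : 0 < d * α * s ^ (α - 1) * t ^ β := by positivity
    have hposT : 0 < d * β * s ^ α * t ^ (β - 1) := by positivity
    have hrs : r < s := by
      by_contra hcon
      push_neg at hcon
      have h1 : s ^ (p-2) ≤ r ^ (p-2) := Real.rpow_le_rpow hs.le hcon hp2.le
      have h2 : b₁ * p * s ^ (p-2) ≤ b₁ * p * (a₁/(b₁*p)) :=
        mul_le_mul_of_nonneg_left (h1.trans hrp₁) hb₁p.le
      have h3 : b₁ * p * (a₁/(b₁*p)) = a₁ := by field_simp
      have hb' : b₁ * p * s ^ (p-2) ≤ a₁ := by linarith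
      have h4 : b₁ * p * s ^ (p-2) * s ≤ a₁ * s := mul_le_mul_of_nonneg_right hb' hs.le
      have h5 : (0:ℝ) < a₁ * s + d * α * s ^ (α-1) * t ^ β := by positivity
      linarith
    have hrt : r < t := by
      by_contra hcon
      push_neg at hcon
      have h1 : t ^ (p-2) ≤ r ^ (p-2) := Real.rpow_le_rpow ht.le hcon hp2.le
      have h2 : b₂ * p * t ^ (p-2) ≤ b₂ * p * (a₂/(b₂*p)) :=
        mul_le_mul_of_nonneg_left (h1.trans hrp₂) hb₂p.le
      have h3 : b₂ * p * (a₂/(b₂*p)) = a₂ := by field_simp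
      have hb' : b₂ * p * t ^ (p-2) ≤ a₂ := by linarith
      have h4 : b₂ * p * t ^ (p-2) * t ≤ a₂ * t := mul_le_mul_of_nonneg_right hb' ht.le
      have h5 : (0:ℝ) < a₂ * t + d * β * s ^ α * t ^ (β-1) := by positivity
      linarith
    have hone : ∀ x : ℝ, 0 < x → x ^ (p-2) ≤ 1 → x ≤ 1 := by
      intro x hx hxp
      by_contra hcon
      push_neg at hcon
      have h1 : (1:ℝ) < x ^ (p-2) := by
        have := Real.rpow_lt_rpow (by norm_num : (0:ℝ) ≤ 1) hcon hp2
        simpa [Real.one_rpow] using this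
      linarith
    have hmax : s ≤ 1 ∧ t ≤ 1 := by
      rcases le_total t s with hts | hst
      · have htβ : t ^ β ≤ s ^ β := Real.rpow_le_rpow ht.le hts hβ0.le
        have hmul : d * α * s ^ (α-1) * t ^ β ≤ d * α * (s ^ (p-2) * s) := by
          calc d * α * s ^ (α-1) * t ^ β ≤ d * α * s ^ (α-1) * s ^ β :=
                mul_le_mul_of_nonneg_left htβ (by positivity)
            _ = d * α * (s ^ (α-1) * s ^ β) := by ring
            _ = d * α * (s ^ (p-2) * s) := by rw [hsplitα s hs, hsplit s hs]
        have e3 : b₁ * p * (s ^ (p-2) * s) = (2*a₁ + d*α) * (s ^ (p-2) * s) := by rw [hc₁]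
        have h4 : 2 * a₁ * (s ^ (p-2) * s) ≤ 2 * a₁ * s := by linarith
        have h5 : s ^ (p-2) * s ≤ s := le_of_mul_le_mul_left h4 (by positivity)
        have hsp2 : s ^ (p-2) ≤ 1 := by
          have h6 : s ^ (p-2) * s ≤ 1 * s := by linarith
          exact le_of_mul_le_mul_right h6 hs
        have hs1 : s ≤ 1 := hone s hs hsp2
        exact ⟨hs1, hts.trans hs1⟩
      · have hsα : s ^ α ≤ t ^ α := Real.rpow_le_rpow hs.le hst hα0.le
        have hmul : d * β * s ^ α * t ^ (β-1) ≤ d * β * (t ^ (p-2) * t) := by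
          calc d * β * s ^ α * t ^ (β-1) = d * β * t ^ (β-1) * s ^ α := by ring
            _ ≤ d * β * t ^ (β-1) * t ^ α :=
                mul_le_mul_of_nonneg_left hsα (by positivity)
            _ = d * β * (t ^ α * t ^ (β-1)) := by ring
            _ = d * β * (t ^ (p-2) * t) := by rw [hsplitβ t ht, hsplit t ht]
        have e3 : b₂ * p * (t ^ (p-2) * t) = (2*a₂ + d*β) * (t ^ (p-2) * t) := by rw [hc₂]
        have h4 : 2 * a₂ * (t ^ (p-2) * t) ≤ 2 * a₂ * t := by linarith
        have h5 : t ^ (p-2) * t ≤ t := le_of_mul_le_mul_left h4 (by positivity)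
        have htp2 : t ^ (p-2) ≤ 1 := by
          have h6 : t ^ (p-2) * t ≤ 1 * t := by linarith
          exact le_of_mul_le_mul_right h6 ht
        have ht1 : t ≤ 1 := hone t ht htp2
        exact ⟨hst.trans ht1, ht1⟩
    exact ⟨⟨hrs, lt_of_le_of_lt hmax.1 hR1⟩, ⟨hrt, lt_of_le_of_lt hmax.2 hR1⟩⟩
  · -- part (iv)
    refine ⟨1, ⟨hr1.le, by linarith⟩, 1, ⟨hr1.le, by linarith⟩, ?_⟩
    intro s t hs ht
    have h1 := pow2_le s p hs hp
    have h2 := pow2_le t p ht hp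
    have h3 := amgm s t α β hs ht hα0 hβ0
    rw [hαβ] at h3
    have ha₁' := mul_le_mul_of_nonneg_left h1 ha₁.le
    have ha₂' := mul_le_mul_of_nonneg_left h2 ha₂.le
    have hd' := mul_le_mul_of_nonneg_left h3 hd.le
    have e3 : b₁ * p * s ^ p = (2*a₁ + d*α) * s ^ p := by rw [hc₁]
    have e4 : b₂ * p * t ^ p = (2*a₂ + d*β) * t ^ p := by rw [hc₂]
    have e11 : eFun a₁ a₂ b₁ b₂ d p α β 1 1 = a₁ + a₂ - b₁ - b₂ + d := by
      simp [eFun, Real.one_rpow]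
    have hP : p * (a₁ + a₂ - b₁ - b₂ + d) = (a₁ + a₂) * (p - 2) := by
      linear_combination -hc₁ - hc₂ - d * hαβ
    have hgoal : p * eFun a₁ a₂ b₁ b₂ d p α β s t ≤
        p * eFun a₁ a₂ b₁ b₂ d p α β 1 1 := by
      rw [e11, hP]
      unfold eFun
      linarith [ha₁', ha₂', hd', e3, e4]
    exact le_of_mul_le_mul_left hgoal hp0
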